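/- If the digraph H(p,q,d) has no multiple arcs, then d ≤ min(p,q). -/
import Mathlib


/-- The OTIS transpose map: for a = iq+j (0 ≤ i < p, 0 ≤ j < q), tau a = (q-1-j)p + (p-1-i). -/
def tau (p q a : ℕ) : ℕ := (q - 1 - a % q) * p + (p - 1 - a / q)

/-- Arc multiplicity from vertex u to vertex v in H(p,q,d). -/
def mult (p q d u v : ℕ) : ℕ :=
  ((Finset.range d).filter (fun r => tau p q (d * u + r) / d = v)).card

/-- There is an arc from u to v in H(p,q,d). -/
def arc (p q d u v : ℕ) : Prop := ∃ r < d, tau p q (d * u + r) / d = v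

lemma otis_div_helper (d m N k : ℕ) (hd : 0 < d) (hm : 0 < m) (hN : N = d * m)
    (hk1 : 1 ≤ k) (hk2 : k ≤ d) : (N - k) / d = m - 1 := by
  have h0 : d ≤ d * m := Nat.le_mul_of_pos_right _ hm
  have h1 : d * (m - 1) = d * m - d := by rw [Nat.mul_sub, mul_one]
  have h2 : N - k = d * (m - 1) + (d - k) := by omega
  rw [h2, Nat.mul_add_div hd, Nat.div_eq_of_lt (by omega), Nat.add_zero]

theorem stmt_12 (p q d : ℕ) (hp : 1 < p) (hq : 1 < q) (hd : 1 < d) (hdiv : d ∣ p * q)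
    (hnomult : ∀ u < p * q / d, ∀ v : ℕ, mult p q d u v ≤ 1) :
    d ≤ min p q := by
  by_contra hlt
  push_neg at hlt
  obtain ⟨m, hm⟩ := hdiv
  have hcomm : q * p = p * q := mul_comm q p
  have hpq : 2 * p ≤ p * q := by nlinarith
  have hqp : 2 * q ≤ p * q := by nlinarith
  have hm1 : 1 ≤ m := by nlinarith
  have hdiveq : p * q / d = m := by rw [hm, Nat.mul_div_cancel_left _ (by omega)]
  have hu : 0 < p * q / d := by omega
  have hA : tau p q 0 = p * q - 1 := by
    unfold tau
    simp only [Nat.zero_mod, Nat.zero_div, Nat.sub_zero, Nat.sub_mul, one_mul]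
    omega
  have hA' : tau p q 0 / d = m - 1 := by
    rw [hA]; exact otis_div_helper d m (p * q) 1 (by omega) hm1 hm le_rfl (by omega)
  have key := hnomult 0 hu (m - 1)
  rcases min_lt_iff.mp hlt with hpd | hqd
  · -- p < d : use r = 0 and r = 1
    have hB : tau p q 1 = p * q - 1 - p := by
      unfold tau
      rw [Nat.mod_eq_of_lt (by omega), Nat.div_eq_of_lt (by omega)]
      simp only [Nat.sub_zero]
      have : (q - 1 - 1) * p = q * p - 1 * p - 1 * p := by
        rw [Nat.sub_mul, Nat.sub_mul]
      omega
    have hB' : tau p q 1 / d = m - 1 := by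
      rw [hB]
      have : p * q - 1 - p = p * q - (1 + p) := by omega
      rw [this]
      exact otis_div_helper d m (p * q) (1 + p) (by omega) hm1 hm (by omega) (by omega)
    have h1 : (1 : ℕ) < mult p q d 0 (m - 1) := by
      apply Finset.one_lt_card.mpr
      refine ⟨0, ?_, 1, ?_, by omega⟩
      · exact Finset.mem_filter.mpr ⟨Finset.mem_range.mpr (by omega), by
          simpa using hA'⟩
      · exact Finset.mem_filter.mpr ⟨Finset.mem_range.mpr (by omega), by
          simpa using hB'⟩
    omega
  · -- q < d : use r = 0 and r = q
    have hC : tau p q q = p * q - 2 := by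
      unfold tau
      rw [Nat.mod_self, Nat.div_self (by omega)]
      simp only [Nat.sub_zero, Nat.sub_mul, one_mul]
      omega
    have hC' : tau p q q / d = m - 1 := by
      rw [hC]
      exact otis_div_helper d m (p * q) 2 (by omega) hm1 hm (by omega) (by omega)
    have h1 : (1 : ℕ) < mult p q d 0 (m - 1) := by
      apply Finset.one_lt_card.mpr
      refine ⟨0, ?_, q, ?_, by omega⟩
      · exact Finset.mem_filter.mpr ⟨Finset.mem_range.mpr (by omega), by
          simpa using hA'⟩
      · exact Finset.mem_filter.mpr ⟨Finset.mem_range.mpr (by omega), by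
          simpa using hC'⟩
    omega
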